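/- Let s = 2, n ≥ 2, and let P = E^a N E^b N Q N E^c be a valid path from (0,0) to (nr, 2n), where a + b + c < r, E^a N E^b N is the prefix up to the second N-step, and N E^c is the final N-step followed by the terminal run of E-steps. Then Q ends with at least r+1 east steps. -/

import Mathlib

/-- The vector of a step: `true` is an east step `E=(1,0)`, `false` is a north step `N=(0,1)`. -/
def stepVec (b : Bool) : ℤ × ℤ := if b then (1, 0) else (0, 1)

/-- The point of the lattice path reached after the first `i` steps, starting at `start`. -/
def pathPoint (start : ℤ × ℤ) (steps : List Bool) (i : ℕ) : ℤ × ℤ :=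
  start + ((steps.take i).map stepVec).sum

/-- The path with step list `steps` starting at `start` ends at `fin`. -/
def IsPathFrom (start fin : ℤ × ℤ) (steps : List Bool) : Prop :=
  pathPoint start steps steps.length = fin

/-- Validity of a lattice path with respect to the equivalence `v ~ v + ℓ(r,s)`:
whenever the path enters a point `v` with an `E`-step, every later point of the path
in the class of `v` is also entered with an `E`-step. -/
def Valid (r s : ℤ) (start : ℤ × ℤ) (steps : List Bool) : Prop :=
  ∀ i j, i < j → ∀ (hi : i < steps.length) (hj : j < steps.length),
    (∃ ℓ : ℤ, pathPoint start steps (j + 1) - pathPoint start steps (i + 1) = (ℓ * r, ℓ * s)) →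
    steps.get ⟨i, hi⟩ = true → steps.get ⟨j, hj⟩ = true

namespace CaseTwoAux

/-- Build the path `E^{g_0} N E^{g_1} N ... E^{g_{k-1}} N` from the list of gaps. -/
def body : List ℕ → List Bool
  | [] => []
  | k :: gs => List.replicate k true ++ false :: body gs

lemma body_append (xs ys : List ℕ) : body (xs ++ ys) = body xs ++ body ys := by
  induction xs with
  | nil => rfl
  | cons k xs ih => simp [body, ih]

@[simp] lemma body_count_true (gs : List ℕ) : (body gs).count true = gs.sum := by
  induction gs with
  | nil => rfl
  | cons k gs ih =>
    simp [body, ih, List.count_append, List.count_cons, List.count_replicate]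

@[simp] lemma body_count_false (gs : List ℕ) : (body gs).count false = gs.length := by
  induction gs with
  | nil => rfl
  | cons k gs ih =>
    simp [body, ih, List.count_append, List.count_cons, List.count_replicate]

@[simp] lemma body_length (gs : List ℕ) : (body gs).length = gs.sum + gs.length := by
  induction gs with
  | nil => rfl
  | cons k gs ih => simp [body, ih]; omega

lemma parse (L : List Bool) : ∃ gs t, L = body gs ++ List.replicate t true := by
  induction L with
  | nil => exact ⟨[], 0, rfl⟩
  | cons s L ih =>
    obtain ⟨gs, t, rfl⟩ := ih
    cases s with
    | false => exact ⟨0 :: gs, t, by simp [body]⟩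
    | true =>
      cases gs with
      | nil => exact ⟨[], t + 1, by simp [body, List.replicate_succ]⟩
      | cons k gs => exact ⟨(k + 1) :: gs, t, by simp [body, List.replicate_succ]⟩

lemma sum_take_mono (gs : List ℕ) {i j : ℕ} (h : i ≤ j) :
    (gs.take i).sum ≤ (gs.take j).sum := by
  rw [show j = i + (j - i) from by omega, List.take_add, List.sum_append]
  exact Nat.le_add_right _ _

lemma sum_map_stepVec (L : List Bool) :
    (L.map stepVec).sum = ((L.count true : ℤ), (L.count false : ℤ)) := by
  induction L with
  | nil => simp; rfl
  | cons s L ih =>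
    cases s <;>
      simp [stepVec, ih, List.count_cons, Prod.ext_iff] <;> push_cast <;> ring

lemma pathPoint_split (X Y : List Bool) (s : Bool) :
    pathPoint (0, 0) (X ++ s :: Y) (X.length + 1)
      = (((X ++ [s]).count true : ℤ), ((X ++ [s]).count false : ℤ)) := by
  have h1 : X ++ s :: Y = (X ++ [s]) ++ Y := by simp
  rw [pathPoint, h1, List.take_left' (by simp), sum_map_stepVec]
  simp

lemma getElem_split (X Y : List Bool) (s : Bool) (hlen : X.length < (X ++ s :: Y).length) :
    (X ++ s :: Y)[X.length] = s := by
  rw [List.getElem_append_right (le_refl _)]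
  simp

/-- The key lemma: in a valid path `body gs ++ E^cc`, there is no `E`-step entering `(p, h)`
(i.e. with `u_h < p ≤ u_{h+1}`) such that `(p + ℓr, h + 2ℓ)` is entered by an `N`-step. -/
lemma key (r : ℕ) (gs : List ℕ) (cc : ℕ) (steps : List Bool)
    (hst : steps = body gs ++ List.replicate cc true)
    (hvalid : Valid r 2 (0, 0) steps)
    (h ℓ p : ℕ) (hℓ : 1 ≤ ℓ) (hlen : h + 2 * ℓ ≤ gs.length)
    (hp1 : (gs.take h).sum < p) (hp2 : p ≤ (gs.take (h + 1)).sum)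
    (heq : p + ℓ * r = (gs.take (h + 2 * ℓ)).sum) : False := by
  set k := h + 2 * ℓ - 1 with hkdef
  have hk1 : k + 1 = h + 2 * ℓ := by omega
  have hh : h < gs.length := by omega
  have hk : k < gs.length := by omega
  have hsucc_h : (gs.take (h + 1)).sum = (gs.take h).sum + gs[h] :=
    List.sum_take_succ _ _ hh
  have hsucc_k : (gs.take (k + 1)).sum = (gs.take k).sum + gs[k] :=
    List.sum_take_succ _ _ hk
  obtain ⟨d, hd⟩ : ∃ d, (gs.take h).sum + 1 + d = p := ⟨p - (gs.take h).sum - 1, by omega⟩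
  have hdlt : d < gs[h] := by omega
  -- decompose `steps` at the E step entering `(p, h)`
  have hdecomp_h : body gs = body (gs.take h) ++ List.replicate gs[h] true
      ++ false :: body (gs.drop (h + 1)) := by
    conv_lhs => rw [← List.take_append_drop h gs]
    rw [body_append, List.drop_eq_getElem_cons hh]
    simp [body]
  have hrep : List.replicate gs[h] true
      = List.replicate d true ++ true :: List.replicate (gs[h] - d - 1) true := by
    rw [show gs[h] = d + (1 + (gs[h] - d - 1)) from by omega, List.replicate_add,
      List.replicate_add]
    simp [List.replicate_succ]
  set X1 : List Bool := body (gs.take h) ++ List.replicate d true with hX1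
  set Y1 : List Bool := (List.replicate (gs[h] - d - 1) true
      ++ false :: body (gs.drop (h + 1))) ++ List.replicate cc true with hY1
  have hsteps1 : steps = X1 ++ true :: Y1 := by
    rw [hst, hdecomp_h, hrep, hX1, hY1]; simp
  -- decompose `steps` at the N step entering `(u_{k+1}, k+1)`
  have hdecomp_k : body gs = body (gs.take k) ++ List.replicate gs[k] true
      ++ false :: body (gs.drop (k + 1)) := by
    conv_lhs => rw [← List.take_append_drop k gs]
    rw [body_append, List.drop_eq_getElem_cons hk]
    simp [body]
  set X2 : List Bool := body (gs.take k) ++ List.replicate gs[k] true with hX2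
  set Y2 : List Bool := body (gs.drop (k + 1)) ++ List.replicate cc true with hY2
  have hsteps2 : steps = X2 ++ false :: Y2 := by
    rw [hst, hdecomp_k, hX2, hY2]; simp
  -- lengths and counts
  have hlt_h : (gs.take h).length = h := by
    rw [List.length_take]; omega
  have hlt_k : (gs.take k).length = k := by
    rw [List.length_take]; omega
  have hX1len : X1.length = (gs.take h).sum + h + d := by
    rw [hX1, List.length_append, body_length, List.length_replicate, hlt_h]
  have hX2len : X2.length = (gs.take (k + 1)).sum + k := by
    rw [hX2, List.length_append, body_length, List.length_replicate, hlt_k, hsucc_k]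
    omega
  set i := X1.length with hidef
  set j := X2.length with hjdef
  have hmono : (gs.take (h + 1)).sum ≤ (gs.take (k + 1)).sum :=
    sum_take_mono gs (by omega)
  have hij : i < j := by omega
  have hi : i < steps.length := by
    rw [hsteps1, List.length_append, List.length_cons]; omega
  have hj : j < steps.length := by
    rw [hsteps2, List.length_append, List.length_cons]; omega
  -- path points entered
  have hpp1 : pathPoint (0, 0) steps (i + 1) = ((p : ℤ), (h : ℤ)) := by
    have hs := pathPoint_split X1 Y1 true
    rw [← hsteps1] at hs
    rw [hs]
    have hct : (X1 ++ [true]).count true = p := by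
      rw [hX1]; simp [List.count_append, List.count_replicate]; omega
    have hcf : (X1 ++ [true]).count false = h := by
      rw [hX1]; simp [List.count_append, List.count_replicate, hlt_h]
    rw [hct, hcf]
  have hpp2 : pathPoint (0, 0) steps (j + 1)
      = (((gs.take (k + 1)).sum : ℤ), ((k : ℤ) + 1)) := by
    have hs := pathPoint_split X2 Y2 false
    rw [← hsteps2] at hs
    rw [hs]
    have hct : (X2 ++ [false]).count true = (gs.take (k + 1)).sum := by
      rw [hX2]; simp [List.count_append, List.count_replicate]; omega
    have hcf : (X2 ++ [false]).count false = k + 1 := by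
      rw [hX2]; simp [List.count_append, List.count_replicate, hlt_k]
    rw [hct, hcf]; push_cast; rfl
  -- the class condition
  have hclass : ∃ ℓz : ℤ, pathPoint (0, 0) steps (j + 1) - pathPoint (0, 0) steps (i + 1)
      = (ℓz * (r : ℤ), ℓz * 2) := by
    refine ⟨(ℓ : ℤ), ?_⟩
    rw [hpp1, hpp2, Prod.mk_sub_mk]
    have hcast : ((gs.take (k + 1)).sum : ℤ) = (p : ℤ) + (ℓ : ℤ) * (r : ℤ) := by
      rw [hk1, ← heq]; push_cast; ring
    rw [hcast]
    have hhk : (k : ℤ) + 1 - (h : ℤ) = (ℓ : ℤ) * 2 := by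
      have hcast2 : (k : ℤ) + 1 = (h : ℤ) + 2 * (ℓ : ℤ) := by exact_mod_cast hk1
      linarith
    rw [Prod.mk.injEq]
    exact ⟨by ring, hhk⟩
  -- the two step values
  have hget1 : steps.get ⟨i, hi⟩ = true := by
    rw [List.get_eq_getElem]
    simp only [hsteps1]
    exact getElem_split X1 Y1 true (by rw [← hsteps1]; exact hi)
  have hget2 : steps.get ⟨j, hj⟩ = false := by
    rw [List.get_eq_getElem]
    simp only [hsteps2]
    exact getElem_split X2 Y2 false (by rw [← hsteps2]; exact hj)
  have := hvalid i j hij hi hj hclass hget1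
  rw [hget2] at this
  exact Bool.noConfusion this

lemma mul_split (x y z r : ℕ) (h : x + y = z) : x * r + y * r = z * r := by
  subst h; rw [Nat.add_mul]

end CaseTwoAux

open CaseTwoAux in
/-- case (2) of the bijection. If `P = E^a N E^b N Q N E^c` is a valid path from
`(0,0)` to `(nr,2n)` with `a + b + c < r`, then `Q` ends with at least `r+1` east steps. -/
theorem case_two_many_east (r n : ℕ) (hr : 0 < r) (hn : 2 ≤ n)
    (a b c : ℕ) (Q : List Bool) (steps : List Bool)
    (hform : steps = List.replicate a true ++ [false] ++ List.replicate b true ++ [false] ++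
      Q ++ [false] ++ List.replicate c true)
    (habc : a + b + c < r)
    (hpath : IsPathFrom (0, 0) ((n * r : ℤ), (2 * n : ℤ)) steps)
    (hvalid : Valid r 2 (0, 0) steps) :
    ∃ R : List Bool, Q = R ++ List.replicate (r + 1) true := by
  obtain ⟨m, rfl⟩ : ∃ m, n = m + 2 := ⟨n - 2, by omega⟩
  obtain ⟨gsQ, tQ, rfl⟩ := parse Q
  set gs : List ℕ := a :: b :: (gsQ ++ [tQ]) with hgs
  have hst : steps = body gs ++ List.replicate c true := by
    rw [hform, hgs]
    simp [body, body_append, List.append_assoc]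
  -- counts from the endpoint of the path
  have hcounts : steps.count true = (m + 2) * r ∧ steps.count false = 2 * (m + 2) := by
    unfold IsPathFrom pathPoint at hpath
    rw [List.take_length, sum_map_stepVec] at hpath
    rw [Prod.ext_iff] at hpath
    simp only [Prod.mk_add_mk, zero_add] at hpath
    obtain ⟨h1, h2⟩ := hpath
    exact ⟨by exact_mod_cast h1, by exact_mod_cast h2⟩
  have hQlen : gsQ.length = 2 * m + 1 := by
    have := hcounts.2
    rw [hst] at this
    simp [List.count_append, List.count_replicate, hgs] at this
    omega
  have hlen_gs : gs.length = 2 * (m + 2) := by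
    rw [hgs]; simp; omega
  have hsum : gs.sum + c = (m + 2) * r := by
    have h1 := hcounts.1
    rw [hst] at h1
    simp [List.count_append, List.count_replicate] at h1
    linarith [h1]
  have hufull : (gs.take (2 * (m + 2))).sum = gs.sum := by
    rw [List.take_of_length_le (by omega)]
  have hu2 : (gs.take 2).sum = a + b := by
    rw [hgs]; simp
  -- the prefix before the last gap
  have htakeS : gs.take (2 * m + 3) = a :: b :: gsQ := by
    rw [hgs, show (a :: b :: (gsQ ++ [tQ])) = (a :: b :: gsQ) ++ [tQ] from by simp]
    refine List.take_left' ?_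
    simp only [List.length_cons]
    omega
  have hSsum : (gs.take (2 * m + 3)).sum + tQ = gs.sum := by
    rw [htakeS, hgs]; simp; omega
  -- if the last gap of Q is large we are done
  by_cases htQ : r + 1 ≤ tQ
  · refine ⟨body gsQ ++ List.replicate (tQ - (r + 1)) true, ?_⟩
    rw [List.append_assoc, ← List.replicate_add]
    congr 2
    omega
  push_neg at htQ
  -- otherwise derive a contradiction
  exfalso
  have hneg : (m + 2) * r ≤ (gs.take (2 * m + 3)).sum + c + r := by
    linarith [hSsum, hsum, htQ]
  -- the E-step implication
  have Estep : ∀ j, 1 ≤ j → j ≤ m + 1 → (gs.take (2 * j)).sum + c < j * r →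
      (gs.take (2 * j + 1)).sum + c < j * r := by
    intro j hj1 hj2 hA
    by_contra hcon
    push_neg at hcon
    have hc : c < j * r := by
      calc c ≤ (gs.take (2 * j)).sum + c := Nat.le_add_left _ _
        _ < j * r := hA
    obtain ⟨p, hp⟩ := Nat.le.dest hc.le
    -- hp : c + p = j * r
    have e1 : j * r + (m + 2 - j) * r = (m + 2) * r := mul_split _ _ _ _ (by omega)
    refine key r gs c steps hst hvalid (2 * j) (m + 2 - j) p (by omega)
      (by rw [hlen_gs]; omega) (by linarith) (by linarith) ?_
    rw [show 2 * j + 2 * (m + 2 - j) = 2 * (m + 2) from by omega, hufull]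
    linarith
  -- the O-step implication (uses the negated conclusion)
  have Ostep : ∀ j, 1 ≤ j → j ≤ m → (gs.take (2 * j + 1)).sum + c < j * r →
      (gs.take (2 * j + 2)).sum + c < (j + 1) * r := by
    intro j hj1 hj2 hB
    by_contra hcon
    push_neg at hcon
    have hc : c < j * r := by
      calc c ≤ (gs.take (2 * j + 1)).sum + c := Nat.le_add_left _ _
        _ < j * r := hB
    have e1 : (m + 1 - j) * r + (j + 1) * r = (m + 2) * r := mul_split _ _ _ _ (by omega)
    have e2 : j * r + r = (j + 1) * r := by rw [Nat.add_mul, Nat.one_mul]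
    have hSle : (gs.take (2 * m + 3)).sum ≤ gs.sum := by
      rw [← hufull]; exact sum_take_mono gs (by omega)
    have hle : (m + 1 - j) * r ≤ (gs.take (2 * m + 3)).sum := by linarith
    obtain ⟨p, hp⟩ := Nat.le.dest hle
    -- hp : (m+1-j) * r + p = S
    refine key r gs c steps hst hvalid (2 * j + 1) (m + 1 - j) p (by omega)
      (by rw [hlen_gs]; omega) (by linarith) (by linarith) ?_
    rw [show 2 * j + 1 + 2 * (m + 1 - j) = 2 * m + 3 from by omega]
    linarith
  -- the induction
  have inv : ∀ j, 1 ≤ j → j ≤ m + 1 → (gs.take (2 * j)).sum + c < j * r := by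
    intro j
    induction j with
    | zero => intro h1 _; omega
    | succ j ih =>
      intro _ hj2
      rcases Nat.eq_zero_or_pos j with rfl | hj
      · rw [show (2 : ℕ) * (0 + 1) = 2 from by norm_num, hu2,
          show (0 + 1) * r = r from by ring]
        omega
      · have ihj := ih (by omega) (by omega)
        have h1 := Estep j hj (by omega) ihj
        have h2 := Ostep j hj (by omega) h1
        rw [show 2 * (j + 1) = 2 * j + 2 from by ring]
        exact h2
  -- the final contradiction
  have hfin := Estep (m + 1) (by omega) (le_refl _) (inv (m + 1) (by omega) (le_refl _))
  rw [show 2 * (m + 1) + 1 = 2 * m + 3 from by ring] at hfin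
  have e5 : (m + 1) * r + r = (m + 2) * r := by
    have h := mul_split (m + 1) 1 (m + 2) r (by omega)
    rwa [Nat.one_mul] at h
  linarith [hfin, hneg, e5]
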